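/- Assume κ^{<κ} = κ. The relation E_0^{<κ} on 2^κ (equivalence modulo bounded sets, i.e. η E ξ iff there is α < κ with η(β) = ξ(β) for all β > α) is not Borel reducible to the identity relation on 2^κ: there is no Borel function f : 2^κ → 2^κ with η E_0^{<κ} ξ ⟺ f(η) = f(ξ). -/

import Mathlib

open Set

universe u

namespace GDST

def KS (I : Type u) : Type u := I → I
def CS (I : Type u) : Type u := I → Bool

def kBasic {I : Type u} [LT I] (ζ : I → I) (β : I) : Set (KS I) :=
  {η : KS I | ∀ α : I, α < β → η α = ζ α}

def cBasic {I : Type u} [LT I] (ζ : I → Bool) (β : I) : Set (CS I) :=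
  {η : CS I | ∀ α : I, α < β → η α = ζ α}

instance kTop {I : Type u} [LT I] : TopologicalSpace (KS I) :=
  TopologicalSpace.generateFrom {U | ∃ ζ β, U = kBasic ζ β}

instance cTop {I : Type u} [LT I] : TopologicalSpace (CS I) :=
  TopologicalSpace.generateFrom {U | ∃ ζ β, U = cBasic ζ β}

inductive IsCBorel {I : Type u} [LT I] : Set (CS I) → Prop
  | basic (ζ : I → Bool) (β : I) : IsCBorel (cBasic ζ β)
  | compl {s : Set (CS I)} : IsCBorel s → IsCBorel sᶜ
  | iInter {s : I → Set (CS I)} : (∀ i, IsCBorel (s i)) → IsCBorel (⋂ i, s i)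

section Basics

variable {I : Type} [LinearOrder I]

lemma mem_cBasic_self (x : CS I) (β : I) : x ∈ cBasic x β := fun _ _ => rfl

lemma cBasic_subset_of_mem {ζ x : CS I} {β γ : I} (hx : x ∈ cBasic ζ β) (hβγ : β ≤ γ) :
    cBasic x γ ⊆ cBasic ζ β := fun y hy α hα =>
  (hy α (lt_of_lt_of_le hα hβγ)).trans (hx α hα)

lemma isOpen_cBasic (ζ : CS I) (β : I) : IsOpen (cBasic ζ β) :=
  TopologicalSpace.isOpen_generateFrom_of_mem ⟨ζ, β, rfl⟩

lemma cBasis [Nonempty I] :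
    TopologicalSpace.IsTopologicalBasis {U : Set (CS I) | ∃ ζ β, U = cBasic ζ β} := by
  refine ⟨?_, ?_, rfl⟩
  · rintro t₁ ⟨ζ₁, β₁, rfl⟩ t₂ ⟨ζ₂, β₂, rfl⟩ x ⟨hx₁, hx₂⟩
    refine ⟨cBasic x (max β₁ β₂), ⟨x, max β₁ β₂, rfl⟩, mem_cBasic_self x _, ?_⟩
    exact subset_inter (cBasic_subset_of_mem hx₁ (le_max_left _ _))
      (cBasic_subset_of_mem hx₂ (le_max_right _ _))
  · apply eq_univ_of_forall
    intro x
    exact ⟨cBasic x (Classical.arbitrary I), ⟨x, _, rfl⟩, mem_cBasic_self x _⟩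

lemma exists_refine [Nonempty I] {D : Set (CS I)} (hDo : IsOpen D) (hDd : Dense D)
    (ζ : CS I) (β : I) :
    ∃ (x : CS I) (γ : I), x ∈ cBasic ζ β ∧ β ≤ γ ∧ cBasic x γ ⊆ D ∩ cBasic ζ β := by
  obtain ⟨x, hxb, hxD⟩ := cBasis.dense_iff.mp hDd (cBasic ζ β) ⟨ζ, β, rfl⟩
    ⟨ζ, mem_cBasic_self ζ β⟩
  obtain ⟨t, ⟨ζ', β', rfl⟩, hxt, htD⟩ := cBasis.isOpen_iff.mp hDo x hxD
  refine ⟨x, max β β', hxb, le_max_left _ _, subset_inter ?_ ?_⟩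
  · exact (cBasic_subset_of_mem hxt (le_max_right _ _)).trans htD
  · exact cBasic_subset_of_mem hxb (le_max_left _ _)

end Basics


section BCT

variable {I : Type} [LinearOrder I] [Nonempty I]

lemma bct_exists (hubS : ∀ (i : I) (g : {j : I // j < i} → I), ∃ b, ∀ j, g j < b)
    (hub2 : ∀ a b : I, ∃ c : I, a < c ∧ b < c)
    {D : Set (CS I)} (hDo : IsOpen D) (hDd : Dense D)
    (ζ₀ : CS I) (β₀ : I) (i : I) (G : ∀ j, j < i → CS I × I) :
    ∃ p : CS I × I, ∃ βs : I,
      (∀ j (hj : j < i), (G j hj).2 < βs) ∧ i < βs ∧ β₀ < βs ∧ βs ≤ p.2 ∧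
      cBasic p.1 p.2 ⊆ D ∧
      (∀ α, α < βs → (¬ ∃ j : {j : I // j < i}, α < (G j j.2).2) → p.1 α = ζ₀ α) ∧
      (∀ α, α < βs →
        (∀ (j : {j : I // j < i}) (j' : {j : I // j < i}) (a : I),
            a < (G j j.2).2 → a < (G j' j'.2).2 → (G j j.2).1 a = (G j' j'.2).1 a) →
        ∀ (j : {j : I // j < i}), α < (G j j.2).2 → p.1 α = (G j j.2).1 α) := by
  classical
  obtain ⟨β₁, hβ₁⟩ := hubS i (fun j => (G j j.2).2)
  obtain ⟨c₁, hc₁i, hc₁β₀⟩ := hub2 i β₀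
  obtain ⟨βs, hβsc₁, hβsβ₁⟩ := hub2 c₁ β₁
  set ζs : CS I := fun α =>
    if h : ∃ j : {j : I // j < i}, α < (G j j.2).2 then (G h.choose h.choose.2).1 α else ζ₀ α
    with hζs
  obtain ⟨x, γ, hxb, hβγ, hsub⟩ := exists_refine hDo hDd ζs βs
  refine ⟨⟨x, γ⟩, βs, fun j hj => (hβ₁ ⟨j, hj⟩).trans hβsβ₁, hc₁i.trans hβsc₁,
    hc₁β₀.trans hβsc₁, hβγ, fun y hy => (hsub hy).1, ?_, ?_⟩
  · intro α hα hno
    have hx := hxb α hα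
    simp only [hζs] at hx
    rw [dif_neg hno] at hx
    exact hx
  · intro α hα hcoh j hj
    have hx := hxb α hα
    have hex : ∃ j : {j : I // j < i}, α < (G j j.2).2 := ⟨j, hj⟩
    simp only [hζs] at hx
    rw [dif_pos hex] at hx
    exact hx.trans (hcoh hex.choose j α hex.choose_spec hj)

variable [WellFoundedLT I]

noncomputable def bctF (hubS : ∀ (i : I) (g : {j : I // j < i} → I), ∃ b, ∀ j, g j < b)
    (hub2 : ∀ a b : I, ∃ c : I, a < c ∧ b < c)
    (D : I → Set (CS I)) (hD : ∀ i, IsOpen (D i) ∧ Dense (D i))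
    (ζ₀ : CS I) (β₀ : I) : I → CS I × I :=
  wellFounded_lt.fix (fun i rec =>
    (bct_exists hubS hub2 (hD i).1 (hD i).2 ζ₀ β₀ i rec).choose)

theorem BCT (hubS : ∀ (i : I) (g : {j : I // j < i} → I), ∃ b, ∀ j, g j < b)
    (hub2 : ∀ a b : I, ∃ c : I, a < c ∧ b < c)
    (D : I → Set (CS I)) (hD : ∀ i, IsOpen (D i) ∧ Dense (D i))
    (ζ₀ : CS I) (β₀ : I) : ∃ x, x ∈ cBasic ζ₀ β₀ ∧ ∀ i, x ∈ D i := by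
  set F := bctF hubS hub2 D hD ζ₀ β₀ with hFdef
  have hgood : ∀ i : I,
      (∀ j, j < i → (F j).2 < (F i).2 ∧ ∀ α, α < (F j).2 → (F i).1 α = (F j).1 α) ∧
      (∀ α, α < β₀ → (F i).1 α = ζ₀ α) ∧ i < (F i).2 ∧ cBasic (F i).1 (F i).2 ⊆ D i := by
    intro i
    induction i using WellFoundedLT.induction with
    | _ i IH =>
      have heq : F i =
          (bct_exists hubS hub2 (hD i).1 (hD i).2 ζ₀ β₀ i (fun j _ => F j)).choose :=
        WellFounded.fix_eq _ _ _
      obtain ⟨βs, hβs, hiβs, hβ₀βs, hβsle, hsubD, hnew, hold⟩ :=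
        (bct_exists hubS hub2 (hD i).1 (hD i).2 ζ₀ β₀ i (fun j _ => F j)).choose_spec
      have hcoh : ∀ (j : {j : I // j < i}) (j' : {j : I // j < i}) (a : I),
          a < (F j.1).2 → a < (F j'.1).2 → (F j.1).1 a = (F j'.1).1 a := by
        rintro ⟨j, hj⟩ ⟨j', hj'⟩ a ha ha'
        rcases lt_trichotomy j j' with h | h | h
        · exact (((IH j' hj').1 j h).2 a ha).symm
        · simp [h]
        · exact ((IH j hj).1 j' h).2 a ha'
      rw [heq]
      refine ⟨?_, ?_, hiβs.trans_le hβsle, hsubD⟩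
      · intro j hj
        refine ⟨(hβs j hj).trans_le hβsle, fun α hα => ?_⟩
        exact hold α (hα.trans (hβs j hj)) hcoh ⟨j, hj⟩ hα
      · intro α hα
        by_cases hex : ∃ j : {j : I // j < i}, α < (F j.1).2
        · obtain ⟨j, hj⟩ := hex
          have h1 := hold α (hα.trans hβ₀βs) hcoh j hj
          rw [h1]
          exact (IH j.1 j.2).2.1 α hα
        · exact hnew α (hα.trans hβ₀βs) hex
  refine ⟨fun α => (F α).1 α, ?_, ?_⟩
  · intro α hα
    exact (hgood α).2.1 α hα
  · intro i
    apply (hgood i).2.2.2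
    intro α hα
    rcases lt_trichotomy α i with h | h | h
    · exact (((hgood i).1 α h).2 α (hgood α).2.2.1).symm
    · rw [h]
    · exact ((hgood α).1 i h).2 α hα

end BCT

section Meager

variable {I : Type} [LinearOrder I]

def DOFam (D : I → Set (CS I)) : Prop := ∀ i, IsOpen (D i) ∧ Dense (D i)

def MeagerS (S : Set (CS I)) : Prop :=
  ∃ D : I → Set (CS I), DOFam D ∧ S ⊆ (⋂ i, D i)ᶜ

lemma MeagerS.mono {S T : Set (CS I)} (h : MeagerS T) (hST : S ⊆ T) : MeagerS S := by
  obtain ⟨D, hD, hsub⟩ := h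
  exact ⟨D, hD, hST.trans hsub⟩

lemma meagerS_empty : MeagerS (∅ : Set (CS I)) :=
  ⟨fun _ => univ, fun _ => ⟨isOpen_univ, dense_univ⟩, empty_subset _⟩

lemma MeagerS.union {S T : Set (CS I)} (hS : MeagerS S) (hT : MeagerS T) :
    MeagerS (S ∪ T) := by
  obtain ⟨D, hD, hDs⟩ := hS
  obtain ⟨E, hE, hEs⟩ := hT
  refine ⟨fun i => D i ∩ E i, fun i => ⟨(hD i).1.inter (hE i).1,
    ((hD i).2.inter_of_isOpen_left (hE i).2 (hD i).1)⟩, ?_⟩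
  intro x hx hmem
  rcases hx with hx | hx
  · exact hDs hx (mem_iInter.2 fun i => (mem_iInter.1 hmem i).1)
  · exact hEs hx (mem_iInter.2 fun i => (mem_iInter.1 hmem i).2)

lemma meagerS_iUnion (e : I ≃ I × I) {S : I → Set (CS I)} (h : ∀ i, MeagerS (S i)) :
    MeagerS (⋃ i, S i) := by
  choose D hDO hsub using h
  refine ⟨fun k => D (e k).1 (e k).2, fun k => hDO _ _, ?_⟩
  intro x hx hmem
  obtain ⟨i, hxi⟩ := mem_iUnion.1 hx
  apply hsub i hxi
  refine mem_iInter.2 fun j => ?_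
  have := mem_iInter.1 hmem (e.symm (i, j))
  rwa [e.apply_symm_apply] at this

lemma meagerS_of_closed [Nonempty I] {C : Set (CS I)} (hC : IsClosed C)
    (hint : interior C = ∅) : MeagerS C := by
  refine ⟨fun _ => Cᶜ, fun _ => ⟨hC.isOpen_compl, interior_eq_empty_iff_dense_compl.mp hint⟩, ?_⟩
  intro x hx hmem
  exact (mem_iInter.1 hmem (Classical.arbitrary I)) hx

def HasBP (S : Set (CS I)) : Prop :=
  ∃ U : Set (CS I), IsOpen U ∧ MeagerS ((S \ U) ∪ (U \ S))

lemma hasBP_of_isOpen {U : Set (CS I)} (h : IsOpen U) : HasBP U :=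
  ⟨U, h, by simpa using meagerS_empty⟩

lemma frontier_meager [Nonempty I] {U : Set (CS I)} (hU : IsOpen U) :
    MeagerS (closure U \ U) := by
  apply meagerS_of_closed (isClosed_closure.sdiff hU)
  by_contra h
  obtain ⟨x, hx⟩ := nonempty_iff_ne_empty.2 h
  have hxc : x ∈ closure U := (interior_subset hx).1
  obtain ⟨y, hy1, hy2⟩ := (mem_closure_iff.1 hxc) _ isOpen_interior hx
  exact (interior_subset hy1).2 hy2

lemma HasBP.compl [Nonempty I] {S : Set (CS I)} (h : HasBP S) : HasBP Sᶜ := by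
  obtain ⟨U, hU, hM⟩ := h
  refine ⟨(closure U)ᶜ, isClosed_closure.isOpen_compl, ?_⟩
  apply (hM.union (frontier_meager hU)).mono
  rintro x (⟨hxS, hxV⟩ | ⟨hxV, hxS⟩)
  · rw [mem_compl_iff, not_not] at hxV
    by_cases hxU : x ∈ U
    · exact Or.inl (Or.inr ⟨hxU, hxS⟩)
    · exact Or.inr ⟨hxV, hxU⟩
  · rw [notMem_compl_iff] at hxS
    have hxU : x ∉ U := fun hh => hxV (subset_closure hh)
    exact Or.inl (Or.inl ⟨hxS, hxU⟩)

lemma HasBP.iUnion (e : I ≃ I × I) {S : I → Set (CS I)} (h : ∀ i, HasBP (S i)) :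
    HasBP (⋃ i, S i) := by
  choose U hUo hM using h
  refine ⟨⋃ i, U i, isOpen_iUnion hUo, ?_⟩
  apply (meagerS_iUnion e (fun i => hM i)).mono
  rintro x (⟨hx1, hx2⟩ | ⟨hx1, hx2⟩)
  · obtain ⟨i, hxi⟩ := mem_iUnion.1 hx1
    exact mem_iUnion.2 ⟨i, Or.inl ⟨hxi, fun hh => hx2 (mem_iUnion.2 ⟨i, hh⟩)⟩⟩
  · obtain ⟨i, hxi⟩ := mem_iUnion.1 hx1
    exact mem_iUnion.2 ⟨i, Or.inr ⟨hxi, fun hh => hx2 (mem_iUnion.2 ⟨i, hh⟩)⟩⟩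

lemma HasBP.iInter [Nonempty I] (e : I ≃ I × I) {S : I → Set (CS I)}
    (h : ∀ i, HasBP (S i)) : HasBP (⋂ i, S i) := by
  have heq : (⋂ i, S i) = (⋃ i, (S i)ᶜ)ᶜ := by
    rw [compl_iUnion]
    simp
  rw [heq]
  exact (HasBP.iUnion e (fun i => (h i).compl)).compl

lemma IsCBorel.hasBP [Nonempty I] (e : I ≃ I × I) {S : Set (CS I)} (h : IsCBorel S) :
    HasBP S := by
  induction h with
  | basic ζ β => exact hasBP_of_isOpen (isOpen_cBasic ζ β)
  | compl _ ih => exact ih.compl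
  | iInter _ ih => exact HasBP.iInter e ih

end Meager

section Flip

variable {I : Type} [LinearOrder I]

lemma xor_cancel_right (a b : Bool) : xor (xor a b) b = a := by
  cases a <;> cases b <;> rfl

lemma xor_cancel_left (a b : Bool) : xor b (xor a b) = a := by
  cases a <;> cases b <;> rfl

def flipF (d : I → Bool) (x : CS I) : CS I := fun α => xor (x α) (d α)

lemma flipF_flipF (d : I → Bool) (x : CS I) : flipF d (flipF d x) = x := by
  funext α
  exact xor_cancel_right (x α) (d α)

lemma flipF_preimage (d : I → Bool) (ζ : CS I) (β : I) :
    flipF d ⁻¹' cBasic ζ β = cBasic (fun a => xor (ζ a) (d a)) β := by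
  ext x
  constructor
  · intro h α hα
    have h1 : xor (x α) (d α) = ζ α := h α hα
    show x α = xor (ζ α) (d α)
    rw [← h1, xor_cancel_right]
  · intro h α hα
    show xor (x α) (d α) = ζ α
    rw [h α hα]
    exact xor_cancel_right (ζ α) (d α)

lemma flipF_continuous (d : I → Bool) : Continuous (flipF d) := by
  apply continuous_generateFrom_iff.mpr
  rintro s ⟨ζ, β, rfl⟩
  show IsOpen (flipF d ⁻¹' cBasic ζ β)
  refine (congrArg IsOpen (flipF_preimage d ζ β)).mpr ?_
  exact isOpen_cBasic _ _

lemma flipF_dense_preimage [Nonempty I] (d : I → Bool) {D : Set (CS I)} (hD : Dense D) :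
    Dense (flipF d ⁻¹' D) := by
  rw [cBasis.dense_iff]
  rintro o ⟨ζ, β, rfl⟩ _
  obtain ⟨y, hy1, hy2⟩ := cBasis.dense_iff.mp hD (cBasic (fun a => xor (ζ a) (d a)) β)
    ⟨_, β, rfl⟩ ⟨_, mem_cBasic_self _ β⟩
  refine ⟨flipF d y, ?_, ?_⟩
  · intro α hα
    show xor (y α) (d α) = ζ α
    rw [hy1 α hα, xor_cancel_right]
  · show flipF d (flipF d y) ∈ D
    rw [flipF_flipF]
    exact hy2

lemma MeagerS.preimage_flip [Nonempty I] {S : Set (CS I)} (hS : MeagerS S) (d : I → Bool) :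
    MeagerS (flipF d ⁻¹' S) := by
  obtain ⟨D, hD, hsub⟩ := hS
  refine ⟨fun i => flipF d ⁻¹' D i, fun i => ⟨(hD i).1.preimage (flipF_continuous d),
    flipF_dense_preimage d (hD i).2⟩, ?_⟩
  intro x hx hmem
  apply hsub hx
  exact mem_iInter.2 fun i => mem_iInter.1 hmem i

lemma basic_nonmeager [Nonempty I] [WellFoundedLT I]
    (hubS : ∀ (i : I) (g : {j : I // j < i} → I), ∃ b, ∀ j, g j < b)
    (hub2 : ∀ a b : I, ∃ c : I, a < c ∧ b < c)
    (ζ : CS I) (β : I) : ¬ MeagerS (cBasic ζ β) := by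
  rintro ⟨D, hD, hsub⟩
  obtain ⟨x, hx1, hx2⟩ := BCT hubS hub2 D hD ζ β
  exact hsub hx1 (mem_iInter.2 hx2)

lemma zero_one [Nonempty I] [WellFoundedLT I]
    (hubS : ∀ (i : I) (g : {j : I // j < i} → I), ∃ b, ∀ j, g j < b)
    (hub2 : ∀ a b : I, ∃ c : I, a < c ∧ b < c)
    {A : Set (CS I)} (hBP : HasBP A)
    (hinv : ∀ (x : CS I) (d : I → Bool), (∃ β : I, ∀ α, ¬ α < β → d α = false) →
      (x ∈ A ↔ flipF d x ∈ A)) :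
    MeagerS A ∨ MeagerS Aᶜ := by
  classical
  by_contra hcon
  push_neg at hcon
  obtain ⟨hA, hAc⟩ := hcon
  obtain ⟨V, hV, hMV⟩ := hBP.compl
  obtain ⟨U, hU, hMU⟩ := hBP
  have hUne : U.Nonempty := by
    rcases eq_empty_or_nonempty U with h | h
    · subst h
      refine absurd (hMU.mono ?_) hA
      intro x hx
      exact Or.inl ⟨hx, notMem_empty x⟩
    · exact h
  have hVne : V.Nonempty := by
    rcases eq_empty_or_nonempty V with h | h
    · subst h
      refine absurd (hMV.mono ?_) hAc
      intro x hx
      exact Or.inl ⟨hx, notMem_empty x⟩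
    · exact h
  obtain ⟨x₀, hx₀⟩ := hUne
  obtain ⟨t, ⟨ζ, β, rfl⟩, hxt, htU⟩ := cBasis.isOpen_iff.mp hU x₀ hx₀
  obtain ⟨x₁, hx₁⟩ := hVne
  obtain ⟨t', ⟨ζ', β', rfl⟩, hxt', htV⟩ := cBasis.isOpen_iff.mp hV x₁ hx₁
  set γ := max β β' with hγ
  have hsubU : cBasic ζ γ ⊆ U :=
    (cBasic_subset_of_mem (mem_cBasic_self ζ β) (le_max_left _ _)).trans htU
  have hsubV : cBasic ζ' γ ⊆ V :=
    (cBasic_subset_of_mem (mem_cBasic_self ζ' β') (le_max_right _ _)).trans htV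
  set d : I → Bool := fun α => if α < γ then xor (ζ α) (ζ' α) else false with hd
  have hdbd : ∃ b : I, ∀ α, ¬ α < b → d α = false := ⟨γ, fun α h => if_neg h⟩
  have hmap : ∀ x ∈ cBasic ζ' γ, flipF d x ∈ cBasic ζ γ := by
    intro x hx α hα
    show xor (x α) (d α) = ζ α
    rw [hx α hα, hd]
    simp only [if_pos hα]
    exact xor_cancel_left (ζ α) (ζ' α)
  have key : cBasic ζ' γ ⊆ ((Aᶜ \ V) ∪ (V \ Aᶜ)) ∪ flipF d ⁻¹' ((A \ U) ∪ (U \ A)) := by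
    intro x hx
    by_cases h1 : x ∈ (Aᶜ \ V) ∪ (V \ Aᶜ)
    · exact Or.inl h1
    right
    show flipF d x ∈ (A \ U) ∪ (U \ A)
    have hxV : x ∈ V := hsubV hx
    have hxAc : x ∈ Aᶜ := by
      by_contra h2
      exact h1 (Or.inr ⟨hxV, h2⟩)
    refine Or.inr ⟨hsubU (hmap x hx), fun hfA => hxAc ((hinv x d hdbd).mpr hfA)⟩
  exact basic_nonmeager hubS hub2 ζ' γ ((hMV.union (hMU.preimage_flip d)).mono key)

end Flip

section Coord

variable {I : Type} [LinearOrder I]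

lemma isOpen_coord [Nonempty I] (hub2 : ∀ a b : I, ∃ c : I, a < c ∧ b < c)
    (i : I) (b : Bool) : IsOpen {x : CS I | x i = b} := by
  rw [cBasis.isOpen_iff]
  intro x hx
  obtain ⟨γ, hγ, -⟩ := hub2 i i
  refine ⟨cBasic x γ, ⟨x, γ, rfl⟩, mem_cBasic_self x γ, fun y hy => ?_⟩
  show y i = b
  rw [hy i hγ]
  exact hx

lemma class_meager [Nonempty I] (hub2 : ∀ a b : I, ∃ c : I, a < c ∧ b < c) (η : CS I) :
    MeagerS {ξ : CS I | ∃ α : I, ∀ β : I, α < β → ξ β = η β} := by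
  classical
  refine ⟨fun α => {ξ : CS I | ∀ β, α < β → ξ β = η β}ᶜ, fun α => ⟨?_, ?_⟩, ?_⟩
  · rw [isOpen_compl_iff]
    have heq : {ξ : CS I | ∀ β, α < β → ξ β = η β} =
        ⋂ (β : I), {ξ : CS I | α < β → ξ β = η β} := by
      ext ξ
      simp [mem_iInter]
    rw [heq]
    refine isClosed_iInter fun β => ?_
    by_cases hβ : α < β
    · have h2 : {ξ : CS I | α < β → ξ β = η β} = {ξ : CS I | ξ β = η β} := by
        ext ξ
        simp [hβ]
      rw [h2, ← isOpen_compl_iff]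
      have h3 : {ξ : CS I | ξ β = η β}ᶜ = {ξ : CS I | ξ β = !(η β)} := by
        ext ξ
        simp [Bool.eq_not]
      rw [h3]
      exact isOpen_coord hub2 β (!(η β))
    · have h2 : {ξ : CS I | α < β → ξ β = η β} = univ := by
        ext ξ
        simp [hβ]
      rw [h2]
      exact isClosed_univ
  · rw [cBasis.dense_iff]
    rintro o ⟨ζ, γ, rfl⟩ -
    obtain ⟨δ, hδα, hδγ⟩ := hub2 α γ
    refine ⟨fun β => if β = δ then !(η δ) else ζ β, ?_, ?_⟩
    · intro β hβ
      show (if β = δ then !η δ else ζ β) = ζ β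
      rw [if_neg]
      rintro rfl
      exact absurd (hβ.trans hδγ) (lt_irrefl β)
    · intro hall
      have h4 := hall δ hδα
      simp only [if_pos rfl] at h4
      exact (Bool.not_ne_self (η δ)) h4
  · intro ξ hξ hmem
    obtain ⟨α, hα⟩ := hξ
    exact (mem_iInter.1 hmem α) hα

end Coord

/-- assume `κ^{<κ} = κ`.  The relation `E₀^{<κ}` of equivalence modulo bounded
sets on `2^κ` is not Borel reducible to the identity: there is no Borel `f : 2^κ → 2^κ` with
`η E₀ ξ ⟺ f η = f ξ`. -/
theorem stmt11 (κ : Cardinal) (hreg : κ.IsRegular) (hunc : Cardinal.aleph0 < κ)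
    (hpow : Cardinal.powerlt κ κ = κ)
    (I : Type) [LinearOrder I] [WellFoundedLT I] (hI : Cardinal.mk I = κ)
    (hseg : ∀ i : I, Cardinal.mk {j : I // j < i} < κ) :
    ¬ ∃ f : CS I → CS I, (∀ U : Set (CS I), IsOpen U → IsCBorel (f ⁻¹' U)) ∧
      ∀ η ξ : CS I, ((∃ α : I, ∀ β : I, α < β → η β = ξ β) ↔ f η = f ξ) := by
  classical
  haveI hne : Nonempty I := by
    rw [← Cardinal.mk_ne_zero_iff, hI]
    exact hreg.pos.ne'
  have hub : ∀ s : Set I, Cardinal.mk s < κ → ∃ b : I, ∀ a ∈ s, a < b := by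
    intro s hs
    by_contra hb
    push_neg at hb
    have hcover : (univ : Set I) ⊆ ⋃ a ∈ s, Iic a := by
      intro b _
      obtain ⟨a, has, hba⟩ := hb b
      exact mem_biUnion has hba
    have h1 : Cardinal.mk I ≤ Cardinal.mk (⋃ a ∈ s, Iic a) := by
      calc Cardinal.mk I = Cardinal.mk (univ : Set I) := Cardinal.mk_univ.symm
        _ ≤ _ := Cardinal.mk_le_mk_of_subset hcover
    have hIic : ∀ a : I, Cardinal.mk (Iic a) < κ := by
      intro a
      have h2 : Cardinal.mk (Iio a) = Cardinal.mk {j : I // j < a} :=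
        Cardinal.mk_congr (Equiv.subtypeEquivRight (fun x => Set.mem_Iio))
      have h3 : Cardinal.mk (Iic a) ≤ Cardinal.mk (Iio a) + 1 := by
        rw [← Set.Iio_insert]
        exact Cardinal.mk_insert_le
      refine lt_of_le_of_lt h3 ?_
      refine Cardinal.add_lt_of_lt hreg.aleph0_le ?_ ?_
      · rw [h2]; exact hseg a
      · exact lt_of_lt_of_le Cardinal.one_lt_aleph0 hreg.aleph0_le
    have h4 : Cardinal.mk (⋃ a ∈ s, Iic a) < κ := by
      refine lt_of_le_of_lt (Cardinal.mk_biUnion_le _ s) ?_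
      exact Cardinal.mul_lt_of_lt hreg.aleph0_le hs
        (Cardinal.iSup_lt_of_isRegular hreg hs (fun a => hIic a.1))
    rw [hI] at h1
    exact absurd (lt_of_le_of_lt h1 h4) (lt_irrefl κ)
  have hubS : ∀ (i : I) (g : {j : I // j < i} → I), ∃ b, ∀ j, g j < b := by
    intro i g
    obtain ⟨b, hb⟩ := hub (range g) (lt_of_le_of_lt Cardinal.mk_range_le (hseg i))
    exact ⟨b, fun j => hb _ (mem_range_self j)⟩
  have hub2 : ∀ a b : I, ∃ c : I, a < c ∧ b < c := by
    intro a b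
    obtain ⟨c, hc⟩ := hub {a, b}
      (lt_trans (((Set.finite_singleton b).insert a).lt_aleph0) hunc)
    exact ⟨c, hc a (mem_insert a _), hc b (mem_insert_of_mem a rfl)⟩
  have hmk : Cardinal.mk I = Cardinal.mk (I × I) := by
    rw [Cardinal.mk_prod, hI]
    simp only [Cardinal.lift_id]
    rw [Cardinal.mul_eq_self hreg.aleph0_le]
  obtain ⟨e⟩ : Nonempty (I ≃ I × I) := Cardinal.eq.mp hmk
  rintro ⟨f, hBorel, hred⟩
  have hE0flip : ∀ (x : CS I) (d : I → Bool), (∃ β : I, ∀ γ, ¬ γ < β → d γ = false) →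
      f (flipF d x) = f x := by
    rintro x d ⟨β, hβ⟩
    apply (hred (flipF d x) x).mp
    refine ⟨β, fun γ hγ => ?_⟩
    show xor (x γ) (d γ) = x γ
    rw [hβ γ (not_lt.mpr hγ.le), Bool.xor_false]
  have hper : ∀ α : I, ∃ D : I → Set (CS I), DOFam D ∧
      ∀ x y : CS I, x ∈ ⋂ j, D j → y ∈ ⋂ j, D j → f x α = f y α := by
    intro α
    have hAB : IsCBorel (f ⁻¹' {z : CS I | z α = true}) :=
      hBorel _ (isOpen_coord hub2 α true)
    have hABP : HasBP (f ⁻¹' {z : CS I | z α = true}) := hAB.hasBP e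
    have hAinv : ∀ (x : CS I) (d : I → Bool), (∃ β : I, ∀ γ, ¬ γ < β → d γ = false) →
        (x ∈ f ⁻¹' {z : CS I | z α = true} ↔ flipF d x ∈ f ⁻¹' {z : CS I | z α = true}) := by
      intro x d hd
      show f x α = true ↔ f (flipF d x) α = true
      rw [hE0flip x d hd]
    rcases zero_one hubS hub2 hABP hAinv with hm | hm
    · obtain ⟨D, hD, hsub⟩ := hm
      refine ⟨D, hD, fun x y hx hy => ?_⟩
      have hxA : f x α = false :=
        Bool.eq_false_iff.mpr (fun h => hsub h hx)
      have hyA : f y α = false :=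
        Bool.eq_false_iff.mpr (fun h => hsub h hy)
      rw [hxA, hyA]
    · obtain ⟨D, hD, hsub⟩ := hm
      refine ⟨D, hD, fun x y hx hy => ?_⟩
      have hxA : f x α = true := by
        by_contra h
        exact hsub (fun h2 => h h2) hx
      have hyA : f y α = true := by
        by_contra h
        exact hsub (fun h2 => h h2) hy
      rw [hxA, hyA]
  choose D hDO hconst using hper
  have hEDO : DOFam (fun k : I => D (e k).1 (e k).2) := fun k => hDO _ _
  obtain ⟨x₀, -, hx₀⟩ := BCT hubS hub2 _ hEDO (fun _ => false) (Classical.arbitrary I)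
  obtain ⟨Dc, hDc, hclsub⟩ := class_meager hub2 x₀
  obtain ⟨y, -, hy⟩ := BCT hubS hub2 (fun k => D (e k).1 (e k).2 ∩ Dc k)
      (fun k => ⟨(hEDO k).1.inter (hDc k).1,
        (hEDO k).2.inter_of_isOpen_left (hDc k).2 (hEDO k).1⟩)
      (fun _ => false) (Classical.arbitrary I)
  have hxE : ∀ α j : I, x₀ ∈ D α j := by
    intro α j
    have h5 := hx₀ (e.symm (α, j))
    rwa [e.apply_symm_apply] at h5
  have hyE : ∀ α j : I, y ∈ D α j := by
    intro α j
    have h5 := (hy (e.symm (α, j))).1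
    rwa [e.apply_symm_apply] at h5
  have hfeq : f y = f x₀ := funext fun α =>
    hconst α y x₀ (mem_iInter.2 fun j => hyE α j) (mem_iInter.2 fun j => hxE α j)
  have hycl : y ∈ {ξ : CS I | ∃ α : I, ∀ β : I, α < β → ξ β = x₀ β} := (hred y x₀).mpr hfeq
  exact hclsub hycl (mem_iInter.2 fun k => (hy k).2)

end GDST
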